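/- arXiv:1211.0423 — 3 statements merged into one kernel-verified Lean document; each statement's English description precedes it below -/
import Mathlib

section
/- Let n ∈ ℕ with n ≥ 3 and let {D_{î}}_{i ∈ [n]} be a family of positive real numbers such that for every i ∈ [n] one has the strict inequality (n−2)·D_{î} < Σ_{j ∈ [n]∖{i}} D_{ĵ}. Then there exists a positive-weighted tree 𝒯=(T,w) with at least n leaves, with distinct leaves 1,…,n, such that D_{[n]∖{i}}(𝒯) = D_{î} for every i ∈ [n]. -/
open SimpleGraph Finset

/-- The total weight of a subgraph: the sum of the weights of its edges. -/
noncomputable def subgraphWeight {V : Type} [Fintype V] {G : SimpleGraph V}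
    (w : Sym2 V → ℝ) (R : G.Subgraph) : ℝ :=
  ∑ e ∈ (Set.toFinite R.edgeSet).toFinset, w e

/-- `graphDist G w I` is the minimum of `subgraphWeight w R` over connected
subgraphs `R` of `G` whose vertex set contains `I`. -/
noncomputable def graphDist {V : Type} [Fintype V] (G : SimpleGraph V)
    (w : Sym2 V → ℝ) (I : Set V) : ℝ :=
  sInf { x : ℝ | ∃ R : G.Subgraph, R.Connected ∧ I ⊆ R.verts ∧ subgraphWeight w R = x }

/-- A weight function is positive on a graph if every edge has positive weight. -/
def PosWeighted {V : Type} (G : SimpleGraph V) (w : Sym2 V → ℝ) : Prop :=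
  ∀ e ∈ G.edgeSet, 0 < w e

/-- A leaf of a graph is a vertex of degree 1. -/
def IsLeaf {V : Type} (G : SimpleGraph V) (v : V) : Prop :=
  (G.neighborSet v).ncard = 1

/-- The star graph on `Option (Fin n)` with center `none`. -/
def starG (n : ℕ) : SimpleGraph (Option (Fin n)) where
  Adj a b := a ≠ b ∧ (a = none ∨ b = none)
  symm := ⟨fun a b ⟨h1, h2⟩ => ⟨h1.symm, h2.symm⟩⟩
  loopless := ⟨fun a ⟨h1, _⟩ => h1 rfl⟩

lemma starG_adj {n : ℕ} {a b : Option (Fin n)} :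
    (starG n).Adj a b ↔ a ≠ b ∧ (a = none ∨ b = none) := Iff.rfl

lemma starG_adj_some_left {n : ℕ} {j : Fin n} {x : Option (Fin n)}
    (h : (starG n).Adj (some j) x) : x = none := by
  rcases h with ⟨h1, h2 | h2⟩ <;> simp_all

lemma starG_reach_none {n : ℕ} (u : Option (Fin n)) :
    (starG n).Reachable u none := by
  by_cases h : u = none
  · rw [h]
  · exact SimpleGraph.Adj.reachable ⟨h, Or.inr rfl⟩

lemma starG_connected (n : ℕ) : (starG n).Connected :=
  SimpleGraph.Connected.mk fun u v => (starG_reach_none u).trans (starG_reach_none v).symm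

lemma starG_acyclic (n : ℕ) : (starG n).IsAcyclic := by
  rw [isAcyclic_iff_forall_adj_isBridge]
  intro v w h
  rw [isBridge_iff]
  -- after removing the edge, there is no edge at the non-`none` endpoint
  have key : ∀ (j : Fin n) (x : Option (Fin n)),
      ¬ ((starG n) \ fromEdgeSet {s(some j, none)}).Adj (some j) x := by
    intro j x hadj
    rcases hadj with ⟨hG, hnot⟩
    have hx := starG_adj_some_left hG
    subst hx
    exact hnot (by simp)
  have noreach : ∀ (j : Fin n),
      ¬ ((starG n) \ fromEdgeSet {s(some j, none)}).Reachable (some j) none := by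
    intro j ⟨p⟩
    have hnil : ¬ p.Nil := SimpleGraph.Walk.not_nil_of_ne (by simp)
    exact key j _ (p.adj_snd hnil)
  rcases h with ⟨hne, h | h⟩
  · subst h
    cases w with
    | none => exact absurd rfl hne
    | some j =>
      intro hr
      apply noreach j
      have hsw : s(none, some j) = s(some j, none) := Sym2.eq_swap
      rw [hsw] at hr
      exact hr.symm
  · subst h
    cases v with
    | none => exact absurd rfl hne
    | some j => exact noreach j

lemma starG_neighborSet_some {n : ℕ} (j : Fin n) :
    (starG n).neighborSet (some j) = {none} := by
  ext x
  simp only [SimpleGraph.mem_neighborSet, starG_adj, Set.mem_singleton_iff]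
  constructor
  · rintro ⟨h1, h2 | h2⟩ <;> simp_all
  · rintro rfl; exact ⟨by simp, Or.inr rfl⟩

lemma starG_leaf_some {n : ℕ} (j : Fin n) : IsLeaf (starG n) (some j) := by
  unfold IsLeaf
  rw [starG_neighborSet_some]
  exact Set.ncard_singleton _

/-- Theorem 3.2(b), sufficiency: a family of positive reals satisfying the
strict inequalities is realized by a positive-weighted tree with at least `n`
leaves, with `1,…,n` among its leaves. -/
theorem tree_leaves_exists {n : ℕ} (hn : 3 ≤ n) (D : Fin n → ℝ)
    (hD : ∀ i, 0 < D i)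
    (hineq : ∀ i : Fin n, ((n : ℝ) - 2) * D i < ∑ j ∈ Finset.univ.erase i, D j) :
    ∃ (V : Type) (inst : Fintype V) (T : SimpleGraph V) (w : Sym2 V → ℝ)
      (ι : Fin n → V), T.IsTree ∧ PosWeighted T w ∧ Function.Injective ι ∧
      (∀ i : Fin n, IsLeaf T (ι i)) ∧ n ≤ {v : V | IsLeaf T v}.ncard ∧
      ∀ i : Fin n, @graphDist V inst T w (ι '' {j | j ≠ i}) = D i := by
  classical
  set S : ℝ := (∑ j, D j) / ((n : ℝ) - 1) with hS
  have hn1 : (0 : ℝ) < (n : ℝ) - 1 := by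
    have : (3 : ℝ) ≤ (n : ℝ) := by exact_mod_cast hn
    linarith
  -- positivity of the edge weights
  have hpos : ∀ i : Fin n, 0 < S - D i := by
    intro i
    have h1 := hineq i
    have h2 : ∑ j ∈ Finset.univ.erase i, D j = (∑ j, D j) - D i := by
      rw [Finset.sum_erase_eq_sub (Finset.mem_univ i)]
    rw [h2] at h1
    have h3 : ((n : ℝ) - 1) * D i < ∑ j, D j := by linarith
    have h4 : D i < S := by
      rw [hS, lt_div_iff₀ hn1]; linarith
    linarith
  set g : Option (Fin n) → ℝ := fun o => o.elim 0 (fun j => S - D j) with hg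
  set w : Sym2 (Option (Fin n)) → ℝ :=
    Sym2.lift ⟨fun a b => g a + g b, fun a b => by ring⟩ with hw
  have hw_mk : ∀ a b, w s(a, b) = g a + g b := fun a b => rfl
  have hg_nonneg : ∀ o, 0 ≤ g o := by
    intro o; cases o with
    | none => simp [hg]
    | some j => exact le_of_lt (by simpa [hg] using hpos j)
  have hw_nonneg : ∀ e, 0 ≤ w e := by
    intro e
    induction e using Sym2.ind with
    | _ a b => rw [hw_mk]; exact add_nonneg (hg_nonneg a) (hg_nonneg b)
  -- key sums
  have hsum : ∀ i : Fin n, ∑ j ∈ Finset.univ.erase i, (S - D j) = D i := by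
    intro i
    rw [Finset.sum_sub_distrib, Finset.sum_const, Finset.sum_erase_eq_sub (Finset.mem_univ i),
      Finset.card_erase_of_mem (Finset.mem_univ i), Finset.card_univ, Fintype.card_fin]
    have hcast : ((n - 1 : ℕ) : ℝ) = (n : ℝ) - 1 := by
      have : 1 ≤ n := by omega
      push_cast [Nat.cast_sub this]; ring
    rw [nsmul_eq_mul, hcast]
    have : ((n : ℝ) - 1) * S = ∑ j, D j := by
      rw [hS]; field_simp
    rw [this]; ring
  refine ⟨Option (Fin n), inferInstance, starG n, w, some, ⟨starG_connected n, starG_acyclic n⟩,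
    ?_, Option.some_injective _, fun i => starG_leaf_some i, ?_, ?_⟩
  · -- PosWeighted
    intro e he
    induction e using Sym2.ind with
    | _ a b =>
      rw [SimpleGraph.mem_edgeSet] at he
      rcases he with ⟨hne, h | h⟩
      · subst h
        cases b with
        | none => exact absurd rfl hne
        | some j => rw [hw_mk]; simpa [hg] using hpos j
      · subst h
        cases a with
        | none => exact absurd rfl hne
        | some j => rw [hw_mk]; simpa [hg] using hpos j
  · -- at least n leaves
    have hsub : (some '' (Set.univ : Set (Fin n))) ⊆ {v | IsLeaf (starG n) v} := by
      rintro _ ⟨j, -, rfl⟩; exact starG_leaf_some j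
    have := Set.ncard_le_ncard hsub (Set.toFinite _)
    rw [Set.ncard_image_of_injective _ (Option.some_injective _), Set.ncard_univ,
      Nat.card_eq_fintype_card, Fintype.card_fin] at this
    exact this
  · -- the distances
    intro i
    unfold graphDist
    -- the set of vertices of the optimal subgraph
    set s : Set (Option (Fin n)) := insert none (some '' {j | j ≠ i}) with hs_def
    set R : (starG n).Subgraph := (⊤ : (starG n).Subgraph).induce s with hR
    have hRverts : R.verts = s := rfl
    have hRadj : ∀ a b, R.Adj a b ↔ a ∈ s ∧ b ∈ s ∧ (starG n).Adj a b := by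
      intro a b
      rw [hR, SimpleGraph.Subgraph.induce_adj]
      simp [SimpleGraph.Subgraph.top_adj]
    -- the edge set of R
    have hRedge : (Set.toFinite R.edgeSet).toFinset
        = (Finset.univ.erase i).image (fun j => s(some j, none)) := by
      ext e
      rw [Set.Finite.mem_toFinset]
      induction e using Sym2.ind with
      | _ a b =>
        rw [SimpleGraph.Subgraph.mem_edgeSet, hRadj]
        constructor
        · rintro ⟨ha, hb, hne, h | h⟩
          · subst h
            rcases hb with hb | ⟨j, hj, rfl⟩
            · exact absurd hb.symm hne
            · rw [Finset.mem_image]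
              exact ⟨j, Finset.mem_erase.2 ⟨hj, Finset.mem_univ j⟩, Sym2.eq_swap⟩
          · subst h
            rcases ha with ha | ⟨j, hj, rfl⟩
            · exact absurd ha hne
            · rw [Finset.mem_image]
              exact ⟨j, Finset.mem_erase.2 ⟨hj, Finset.mem_univ j⟩, rfl⟩
        · intro hmem
          rw [Finset.mem_image] at hmem
          rcases hmem with ⟨j, hj, hje⟩
          have hj' : j ≠ i := (Finset.mem_erase.1 hj).1
          rw [Sym2.eq_iff] at hje
          rcases hje with ⟨h1, h2⟩ | ⟨h1, h2⟩
          · subst h1; subst h2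
            exact ⟨Or.inr ⟨j, hj', rfl⟩, Or.inl rfl, by simp, Or.inr rfl⟩
          · subst h1; subst h2
            exact ⟨Or.inl rfl, Or.inr ⟨j, hj', rfl⟩, by simp, Or.inl rfl⟩
    have hRweight : subgraphWeight w R = D i := by
      unfold subgraphWeight
      rw [hRedge, Finset.sum_image (by intro a _ b _ h; simpa [Sym2.eq_iff] using h)]
      have : ∀ j ∈ Finset.univ.erase i, w s(some j, none) = S - D j := by
        intro j _; rw [hw_mk]; simp [hg]
      rw [Finset.sum_congr rfl this, hsum]
    have hRconn : R.Connected := by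
      rw [SimpleGraph.Subgraph.connected_iff]
      refine ⟨⟨?_⟩, ⟨none, Or.inl rfl⟩⟩
      intro u v
      have hreach : ∀ x : R.verts, R.coe.Reachable x ⟨none, Or.inl rfl⟩ := by
        rintro ⟨x, hx⟩
        rcases hx with hx | ⟨j, hj, rfl⟩
        · subst hx; rfl
        · refine SimpleGraph.Adj.reachable ?_
          rw [SimpleGraph.Subgraph.coe_adj, hRadj]
          exact ⟨Or.inr ⟨j, hj, rfl⟩, Or.inl rfl, by simp, Or.inr rfl⟩
      exact (hreach u).trans (hreach v).symm
    have hImem : some '' {j | j ≠ i} ⊆ R.verts := by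
      rintro _ ⟨j, hj, rfl⟩
      exact Or.inr ⟨j, hj, rfl⟩
    -- lower bound
    have hlb : ∀ x ∈ { x : ℝ | ∃ R' : (starG n).Subgraph, R'.Connected ∧
        some '' {j | j ≠ i} ⊆ R'.verts ∧ subgraphWeight w R' = x }, D i ≤ x := by
      rintro x ⟨R', hconn, hsub, rfl⟩
      -- each edge s(some j, none), j ≠ i, belongs to R'
      have hedge : ∀ j : Fin n, j ≠ i → s(some j, none) ∈ R'.edgeSet := by
        intro j hj
        -- find another vertex k ≠ i, k ≠ j
        have hne : (({i, j} : Finset (Fin n))ᶜ).Nonempty := by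
          rw [← Finset.card_pos, Finset.card_compl, Fintype.card_fin]
          have h2 : ({i, j} : Finset (Fin n)).card ≤ 2 :=
            (Finset.card_insert_le _ _).trans (by simp)
          omega
        obtain ⟨k, hk⟩ := hne
        rw [Finset.mem_compl, Finset.mem_insert, not_or, Finset.mem_singleton] at hk
        obtain ⟨hki, hkj⟩ := hk
        have hjv : some j ∈ R'.verts := hsub ⟨j, hj, rfl⟩
        have hkv : some k ∈ R'.verts := hsub ⟨k, hki, rfl⟩
        obtain ⟨p⟩ := hconn.preconnected.coe ⟨some j, hjv⟩ ⟨some k, hkv⟩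
        have hnil : ¬ p.Nil := by
          apply SimpleGraph.Walk.not_nil_of_ne
          intro h
          apply hkj
          have h' := congrArg Subtype.val h
          simp only [Option.some.injEq] at h'
          exact h'.symm
        have hadj := p.adj_snd hnil
        rw [SimpleGraph.Subgraph.coe_adj] at hadj
        have hnone : ((p.getVert 1 : R'.verts) : Option (Fin n)) = none :=
          starG_adj_some_left (R'.adj_sub hadj)
        rw [hnone] at hadj
        exact hadj
      have hsubE : (Finset.univ.erase i).image (fun j => s(some j, none))
          ⊆ (Set.toFinite R'.edgeSet).toFinset := by
        intro e he
        rw [Finset.mem_image] at he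
        obtain ⟨j, hj, rfl⟩ := he
        rw [Set.Finite.mem_toFinset]
        exact hedge j (Finset.mem_erase.1 hj).1
      have hDi : ∑ e ∈ (Finset.univ.erase i).image (fun j => s(some j, none)), w e = D i := by
        rw [Finset.sum_image (by intro a _ b _ h; simpa [Sym2.eq_iff] using h)]
        have h2 : ∀ j ∈ Finset.univ.erase i, w s(some j, none) = S - D j := by
          intro j _; rw [hw_mk]; simp [hg]
        rw [Finset.sum_congr rfl h2, hsum]
      rw [← hDi]
      exact Finset.sum_le_sum_of_subset_of_nonneg hsubE (fun e _ _ => hw_nonneg e)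
    have hmem : D i ∈ { x : ℝ | ∃ R' : (starG n).Subgraph, R'.Connected ∧
        some '' {j | j ≠ i} ⊆ R'.verts ∧ subgraphWeight w R' = x } :=
      ⟨R, hRconn, hImem, hRweight⟩
    exact IsLeast.csInf_eq ⟨hmem, hlb⟩
end

section
/- Let n ∈ ℕ with n ≥ 3, let 𝒢=(G,w) be a connected positive-weighted graph with exactly n vertices, labelled 1,…,n, and define D_{î} = D_{[n]∖{i}}(𝒢) for each i ∈ [n]. If the maximum of {D_{î}}_{i ∈ [n]} is achieved by at least two indices, then for every i ∈ [n] one has the strict inequality (n−2)·D_{î} < Σ_{j ∈ [n]∖{i}} D_{ĵ}. -/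
open SimpleGraph Finset

/-- `Dhat G w i` is the `(n-1)`-weight `D_{[n]∖{i}}(𝒢)` for a graph on vertex
set `Fin n`. -/
noncomputable def Dhat {n : ℕ} (G : SimpleGraph (Fin n)) (w : Sym2 (Fin n) → ℝ)
    (i : Fin n) : ℝ :=
  graphDist G w {j | j ≠ i}

section Aux

variable {V : Type} [Fintype V] {G : SimpleGraph V} {w : Sym2 V → ℝ}

instance subgraph_finite : Finite G.Subgraph :=
  Finite.of_injective (fun R => (R.verts, R.Adj)) (by
    intro R S h
    rw [Prod.mk.injEq] at h
    exact SimpleGraph.Subgraph.ext h.1 h.2)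

lemma wSet_finite (G : SimpleGraph V) (w : Sym2 V → ℝ) (I : Set V) :
    { x : ℝ | ∃ R : G.Subgraph, R.Connected ∧ I ⊆ R.verts ∧ subgraphWeight w R = x }.Finite :=
  (Set.finite_range (subgraphWeight w)).subset (by rintro x ⟨R, -, -, rfl⟩; exact ⟨R, rfl⟩)

lemma graphDist_le {I : Set V} {R : G.Subgraph} (hR : R.Connected) (hI : I ⊆ R.verts) :
    graphDist G w I ≤ subgraphWeight w R :=
  csInf_le (wSet_finite G w I).bddBelow ⟨R, hR, hI, rfl⟩

lemma exists_realizer (hG : G.Connected) (I : Set V) :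
    ∃ R : G.Subgraph, R.Connected ∧ I ⊆ R.verts ∧ subgraphWeight w R = graphDist G w I := by
  have htop : (⊤ : G.Subgraph).Connected := by
    rw [SimpleGraph.Subgraph.connected_iff']
    exact (SimpleGraph.Subgraph.topIso (G := G)).connected_iff.mpr hG
  have hne : { x : ℝ | ∃ R : G.Subgraph, R.Connected ∧ I ⊆ R.verts ∧
      subgraphWeight w R = x }.Nonempty :=
    ⟨subgraphWeight w ⊤, ⊤, htop, by simp, rfl⟩
  exact hne.csInf_mem (wSet_finite G w I)

lemma subgraphWeight_sup_le (hw : PosWeighted G w) (A B : G.Subgraph) :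
    subgraphWeight w (A ⊔ B) ≤ subgraphWeight w A + subgraphWeight w B := by
  classical
  have hset : (Set.toFinite (A ⊔ B).edgeSet).toFinset
      = (Set.toFinite A.edgeSet).toFinset ∪ (Set.toFinite B.edgeSet).toFinset := by
    ext e
    rw [Set.Finite.mem_toFinset, Finset.mem_union, Set.Finite.mem_toFinset,
      Set.Finite.mem_toFinset, SimpleGraph.Subgraph.edgeSet_sup, Set.mem_union]
  have hui := Finset.sum_union_inter (s₁ := (Set.toFinite A.edgeSet).toFinset)
    (s₂ := (Set.toFinite B.edgeSet).toFinset) (f := w)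
  have hinter : 0 ≤ ∑ e ∈ (Set.toFinite A.edgeSet).toFinset ∩
      (Set.toFinite B.edgeSet).toFinset, w e := by
    apply Finset.sum_nonneg
    intro e he
    have heA : e ∈ A.edgeSet := by
      have := Finset.mem_inter.mp he
      simpa using this.1
    exact (hw e (A.edgeSet_subset heA)).le
  unfold subgraphWeight
  rw [hset]
  linarith

lemma subgraphWeight_subgraphOfAdj {v u : V} (h : G.Adj v u) :
    subgraphWeight w (G.subgraphOfAdj h) = w s(v, u) := by
  unfold subgraphWeight
  have hset : (Set.toFinite (G.subgraphOfAdj h).edgeSet).toFinset = {s(v, u)} := by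
    ext e
    simp
  rw [hset, Finset.sum_singleton]

/-- The minimal weight of an edge of `G` at `v`. -/
noncomputable def minEdge (G : SimpleGraph V) (w : Sym2 V → ℝ) (v : V) : ℝ :=
  sInf { x | ∃ u, G.Adj v u ∧ w s(v, u) = x }

lemma minEdge_set_finite (G : SimpleGraph V) (w : Sym2 V → ℝ) (v : V) :
    { x | ∃ u, G.Adj v u ∧ w s(v, u) = x }.Finite :=
  (Set.finite_range fun u => w s(v, u)).subset (by rintro x ⟨u, -, rfl⟩; exact ⟨u, rfl⟩)

lemma minEdge_le {v u : V} (h : G.Adj v u) : minEdge G w v ≤ w s(v, u) :=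
  csInf_le (minEdge_set_finite G w v).bddBelow ⟨u, h, rfl⟩

lemma exists_minEdge {v : V} (h : ∃ u, G.Adj v u) :
    ∃ u, G.Adj v u ∧ w s(v, u) = minEdge G w v := by
  obtain ⟨u, hu⟩ := h
  have hne : { x | ∃ u, G.Adj v u ∧ w s(v, u) = x }.Nonempty := ⟨w s(v, u), u, hu, rfl⟩
  exact hne.csInf_mem (minEdge_set_finite G w v)

lemma exists_adj (hG : G.Connected) (hcard : 1 < Fintype.card V) (v : V) :
    ∃ u, G.Adj v u := by
  obtain ⟨u, hu⟩ := Fintype.exists_ne_of_one_lt_card hcard v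
  obtain ⟨p⟩ := hG.preconnected v u
  cases p with
  | nil => exact absurd rfl hu
  | cons h q => exact ⟨_, h⟩

/-- Key lemma: in a connected subgraph `R`, for any finset `S` of vertices of `R`
avoiding a fixed root `r ∈ R.verts`, the sum of the minimal incident edge weights
over `S` is at most the total weight of `R`. -/
lemma sum_minEdge_le (hw : PosWeighted G w) {R : G.Subgraph} (hR : R.Connected)
    {r : V} (hr : r ∈ R.verts) {S : Finset V} (hS : ∀ v ∈ S, v ∈ R.verts)
    (hrS : r ∉ S) :
    ∑ v ∈ S, minEdge G w v ≤ subgraphWeight w R := by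
  classical
  have hcoe : R.coe.Connected := SimpleGraph.Subgraph.connected_iff'.mp hR
  let rr : R.verts := ⟨r, hr⟩
  let dR : V → ℕ := fun x => if h : x ∈ R.verts then R.coe.dist ⟨x, h⟩ rr else 0
  have key : ∀ v, v ∈ R.verts → v ≠ r → ∃ u, R.Adj v u ∧ dR u < dR v := by
    intro v hv hvr
    have hne : (⟨v, hv⟩ : R.verts) ≠ rr := fun h => hvr (congrArg Subtype.val h)
    have hreach : R.coe.Reachable ⟨v, hv⟩ rr := hcoe.preconnected _ _
    obtain ⟨p, hp⟩ := hreach.exists_walk_length_eq_dist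
    have hpos : 0 < p.length := by
      rw [hp]
      exact hreach.pos_dist_of_ne hne
    have hnp : ¬ p.Nil := SimpleGraph.Walk.not_nil_iff_lt_length.mpr hpos
    set u : R.verts := p.getVert 1 with hu
    have hadj : R.coe.Adj ⟨v, hv⟩ u := p.adj_snd hnp
    refine ⟨(u : V), ?_, ?_⟩
    · exact (SimpleGraph.Subgraph.coe_adj ..).mp hadj
    · have hdu : R.coe.dist u rr ≤ p.tail.length := SimpleGraph.dist_le p.tail
      have hlen : p.tail.length + 1 = p.length := SimpleGraph.Walk.length_tail_add_one hnp
      have hdlt : R.coe.dist u rr < R.coe.dist ⟨v, hv⟩ rr := by omega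
      have h1 : dR (u : V) = R.coe.dist u rr := by
        simp only [dR]
        rw [dif_pos u.2]
      have h2 : dR v = R.coe.dist ⟨v, hv⟩ rr := by
        simp only [dR]
        rw [dif_pos hv]
      omega
  have key' : ∀ v, ∃ u, v ∈ S → R.Adj v u ∧ dR u < dR v := by
    intro v
    by_cases h : v ∈ S
    · obtain ⟨u, hu1, hu2⟩ := key v (hS v h) (fun he => hrS (he ▸ h))
      exact ⟨u, fun _ => ⟨hu1, hu2⟩⟩
    · exact ⟨v, fun h' => absurd h' h⟩
  choose u hu using key'
  let F : V → Sym2 V := fun v => s(v, u v)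
  have hinj : ∀ v₁ ∈ S, ∀ v₂ ∈ S, F v₁ = F v₂ → v₁ = v₂ := by
    intro v₁ h₁ v₂ h₂ hF
    rcases Sym2.eq_iff.mp hF with ⟨he1, he2⟩ | ⟨he1, he2⟩
    · exact he1
    · exfalso
      have k₁ := (hu v₁ h₁).2
      have k₂ := (hu v₂ h₂).2
      rw [he2] at k₁
      rw [← he1] at k₂
      omega
  have step1 : ∑ v ∈ S, minEdge G w v ≤ ∑ v ∈ S, w (F v) := by
    apply Finset.sum_le_sum
    intro v hv
    exact minEdge_le (R.adj_sub (hu v hv).1)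
  have step2 : ∑ v ∈ S, w (F v) = ∑ e ∈ S.image F, w e :=
    (Finset.sum_image hinj).symm
  have step3 : ∑ e ∈ S.image F, w e ≤ subgraphWeight w R := by
    apply Finset.sum_le_sum_of_subset_of_nonneg
    · intro e he
      obtain ⟨v, hv, rfl⟩ := Finset.mem_image.mp he
      rw [Set.Finite.mem_toFinset]
      exact SimpleGraph.Subgraph.mem_edgeSet.mpr (hu v hv).1
    · intro e he _
      rw [Set.Finite.mem_toFinset] at he
      exact (hw e (R.edgeSet_subset he)).le
  calc ∑ v ∈ S, minEdge G w v ≤ ∑ v ∈ S, w (F v) := step1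
    _ = ∑ e ∈ S.image F, w e := step2
    _ ≤ subgraphWeight w R := step3

end Aux

/-- Theorem 4.1, necessity, part (ii): if the maximum of the `(n-1)`-weights of
a connected positive-weighted graph with exactly `n` vertices is achieved at
least twice, then the inequalities are strict. -/
theorem graph_exactly_n_vertices_strict_ineq {n : ℕ} (hn : 3 ≤ n)
    (G : SimpleGraph (Fin n)) (w : Sym2 (Fin n) → ℝ)
    (hG : G.Connected) (hw : PosWeighted G w)
    (hmax : ∃ i j : Fin n, i ≠ j ∧ (∀ k, Dhat G w k ≤ Dhat G w i) ∧
      Dhat G w i = Dhat G w j) :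
    ∀ i : Fin n, ((n : ℝ) - 2) * Dhat G w i < ∑ j ∈ Finset.univ.erase i, Dhat G w j := by
  classical
  obtain ⟨a, b, hab, hmaxa, haeqb⟩ := hmax
  intro i
  have hcard : Fintype.card (Fin n) = n := Fintype.card_fin n
  have hadj : ∀ v : Fin n, ∃ u, G.Adj v u := by
    intro v
    exact exists_adj hG (by omega) v
  have hmpos : ∀ v : Fin n, 0 < minEdge G w v := by
    intro v
    obtain ⟨u, hu, he⟩ := exists_minEdge (w := w) (hadj v)
    rw [← he]
    exact hw _ (G.mem_edgeSet.mpr hu)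
  -- F2 : attach lemma
  have F2 : ∀ v k : Fin n, Dhat G w k ≤ Dhat G w v + minEdge G w v := by
    intro v k
    obtain ⟨R, hRc, hRv, hRw⟩ := exists_realizer (w := w) hG {j : Fin n | j ≠ v}
    obtain ⟨u, huadj, huw⟩ := exists_minEdge (w := w) (hadj v)
    have hTc : (G.subgraphOfAdj huadj).Connected :=
      SimpleGraph.Subgraph.subgraphOfAdj_connected huadj
    have hsup : (R ⊔ G.subgraphOfAdj huadj).Connected := by
      apply SimpleGraph.Subgraph.connected_sup hRc.preconnected hTc.preconnected
      rw [SimpleGraph.Subgraph.verts_inf]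
      exact ⟨u, hRv huadj.ne', by simp⟩
    have hverts : {j : Fin n | j ≠ k} ⊆ (R ⊔ G.subgraphOfAdj huadj).verts := by
      intro x _
      rw [SimpleGraph.Subgraph.verts_sup]
      by_cases hxv : x = v
      · subst hxv
        right
        simp
      · left
        exact hRv hxv
    calc Dhat G w k ≤ subgraphWeight w (R ⊔ G.subgraphOfAdj huadj) :=
          graphDist_le hsup hverts
      _ ≤ subgraphWeight w R + subgraphWeight w (G.subgraphOfAdj huadj) :=
          subgraphWeight_sup_le hw _ _
      _ = Dhat G w v + minEdge G w v := by
          rw [hRw, subgraphWeight_subgraphOfAdj, huw]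
          rfl
  -- choose k0 ∉ {a, b}
  obtain ⟨k0, hk0a, hk0b⟩ : ∃ k0 : Fin n, k0 ≠ a ∧ k0 ≠ b := by
    by_contra hcon
    push_neg at hcon
    have hsub : (univ : Finset (Fin n)) ⊆ {a, b} := by
      intro x _
      rcases eq_or_ne x a with h | h
      · simp [h]
      · simp [hcon x h]
    have := Finset.card_le_card hsub
    have h2 : ({a, b} : Finset (Fin n)).card ≤ 2 := Finset.card_le_two
    rw [Finset.card_univ, hcard] at this
    omega
  -- realizer for Dhat k0 and the key sum bound
  obtain ⟨Rk, hRkc, hRkv, hRkw⟩ := exists_realizer (w := w) hG {j : Fin n | j ≠ k0}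
  have hL : ∑ v ∈ ((univ : Finset (Fin n)) \ {a, k0}), minEdge G w v ≤ Dhat G w k0 := by
    have hra : a ∈ Rk.verts := hRkv (by simpa using hk0a.symm)
    have := sum_minEdge_le hw hRkc hra
      (S := (univ : Finset (Fin n)) \ {a, k0})
      (fun v hv => hRkv (by
        simp only [Finset.mem_sdiff, Finset.mem_insert, Finset.mem_singleton] at hv
        exact fun h => hv.2 (Or.inr h)))
      (by simp)
    calc ∑ v ∈ ((univ : Finset (Fin n)) \ {a, k0}), minEdge G w v
        ≤ subgraphWeight w Rk := this
      _ = Dhat G w k0 := hRkw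
  -- gap function
  set g : Fin n → ℝ := fun k => Dhat G w a - Dhat G w k with hg
  have hgnonneg : ∀ k, 0 ≤ g k := fun k => by simp [hg, hmaxa k]
  have hga : g a = 0 := by simp [hg]
  have hgb : g b = 0 := by simp [hg, haeqb]
  -- b is in univ \ {a, k0}
  have hbmem : b ∈ ((univ : Finset (Fin n)) \ {a, k0}) := by
    simp only [Finset.mem_sdiff, Finset.mem_univ, true_and, Finset.mem_insert,
      Finset.mem_singleton]
    push_neg
    exact ⟨Ne.symm hab, Ne.symm hk0b⟩
  have hsplitb : minEdge G w b +
      ∑ v ∈ (((univ : Finset (Fin n)) \ {a, k0}).erase b), minEdge G w v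
      = ∑ v ∈ ((univ : Finset (Fin n)) \ {a, k0}), minEdge G w v :=
    Finset.add_sum_erase _ _ hbmem
  -- Claim C
  set T : Finset (Fin n) := (univ : Finset (Fin n)) \ {a, b} with hT
  have hk0T : k0 ∈ T := by
    simp [hT, hk0a, hk0b]
  have hTsplit : g k0 + ∑ v ∈ T.erase k0, g v = ∑ v ∈ T, g v :=
    Finset.add_sum_erase _ _ hk0T
  have hTeq : T.erase k0 = (((univ : Finset (Fin n)) \ {a, k0}).erase b) := by
    ext x
    simp only [hT, Finset.mem_erase, Finset.mem_sdiff, Finset.mem_univ, true_and,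
      Finset.mem_insert, Finset.mem_singleton]
    constructor
    · rintro ⟨hx1, hx2⟩
      push_neg at hx2
      exact ⟨hx2.2, fun h => (h.elim hx2.1 hx1)⟩
    · rintro ⟨hx1, hx2⟩
      push_neg at hx2
      exact ⟨hx2.2, by tauto⟩
  have hTbound : ∑ v ∈ T.erase k0, g v ≤ Dhat G w k0 - minEdge G w b := by
    have h1 : ∑ v ∈ T.erase k0, g v ≤ ∑ v ∈ T.erase k0, minEdge G w v := by
      apply Finset.sum_le_sum
      intro v _
      have hgv : g v = Dhat G w a - Dhat G w v := rfl
      rw [hgv]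
      linarith [F2 v a]
    rw [hTeq] at h1 ⊢
    linarith [h1, hsplitb, hL]
  have hClaimC : ∑ v ∈ T, g v ≤ Dhat G w a - minEdge G w b := by
    have hgk0 : g k0 = Dhat G w a - Dhat G w k0 := rfl
    linarith [hTsplit, hTbound]
  -- sum over erase i
  have hgsum : ∑ j ∈ univ.erase i, g j ≤ Dhat G w a - minEdge G w b := by
    have h1 : ∑ j ∈ univ.erase i, g j ≤ ∑ j ∈ (univ : Finset (Fin n)), g j :=
      Finset.sum_le_sum_of_subset_of_nonneg (Finset.subset_univ _)
        (fun j _ _ => hgnonneg j)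
    have hsub : ({a, b} : Finset (Fin n)) ⊆ univ := Finset.subset_univ _
    have h2 : ∑ j ∈ T, g j + ∑ j ∈ ({a, b} : Finset (Fin n)), g j
        = ∑ j ∈ (univ : Finset (Fin n)), g j := Finset.sum_sdiff hsub
    have h3 : ∑ j ∈ ({a, b} : Finset (Fin n)), g j = 0 := by
      rw [Finset.sum_pair hab, hga, hgb]
      ring
    linarith [hClaimC]
  -- final computation
  have hsum : ∑ j ∈ univ.erase i, Dhat G w j
      = ((n : ℝ) - 1) * Dhat G w a - ∑ j ∈ univ.erase i, g j := by
    have hpt : ∀ j ∈ univ.erase i, Dhat G w j = Dhat G w a - g j := by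
      intro j _
      simp [hg]
    rw [Finset.sum_congr rfl hpt, Finset.sum_sub_distrib, Finset.sum_const,
      Finset.card_erase_of_mem (Finset.mem_univ i), Finset.card_univ, hcard,
      nsmul_eq_mul]
    have : ((n - 1 : ℕ) : ℝ) = (n : ℝ) - 1 := by
      have : (1 : ℕ) ≤ n := by omega
      push_cast [this]
      ring
    rw [this]
  have hDi : Dhat G w i ≤ Dhat G w a := hmaxa i
  have hn2 : (0 : ℝ) ≤ (n : ℝ) - 2 := by
    have : (3 : ℝ) ≤ (n : ℝ) := by exact_mod_cast hn
    linarith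
  have h1 : ((n : ℝ) - 2) * Dhat G w i ≤ ((n : ℝ) - 2) * Dhat G w a :=
    mul_le_mul_of_nonneg_left hDi hn2
  rw [hsum]
  have hb := hmpos b
  nlinarith [h1, hgsum, hb]
end

section
/- Let n ∈ ℕ with n ≥ 3 and let {D_{î}}_{i ∈ [n]} be a family of positive real numbers such that: (i) for every i ∈ [n], (n−2)·D_{î} ≤ Σ_{j ∈ [n]∖{i}} D_{ĵ}; and (ii) if the maximum of {D_{î}}_{i ∈ [n]} is achieved by at least two indices, then all the inequalities in (i) are strict. Then there exists a connected positive-weighted graph 𝒢=(G,w) with exactly n vertices, labelled 1,…,n, such that D_{[n]∖{i}}(𝒢) = D_{î} for every i ∈ [n]. -/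
open SimpleGraph Finset

/- ### Auxiliary lemmas -/

lemma conn_card_le {V : Type} [Fintype V] [DecidableEq V] (G : SimpleGraph V)
    [Fintype G.edgeSet] (h : G.Connected) :
    Fintype.card V ≤ Fintype.card G.edgeSet + 1 := by
  have hne : Nonempty V := h.nonempty
  obtain ⟨root⟩ := hne
  have key : ∀ v : V, v ≠ root → ∃ u, G.Adj v u ∧ G.dist u root < G.dist v root := by
    intro v hv
    obtain ⟨p, hp⟩ := h.exists_walk_length_eq_dist v root
    cases p with
    | nil => exact absurd rfl hv
    | cons hadj q =>
      refine ⟨_, hadj, ?_⟩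
      have h1 : G.dist _ root ≤ q.length := SimpleGraph.dist_le q
      simp only [SimpleGraph.Walk.length_cons] at hp
      omega
  choose nb hadj hlt using key
  have hinj : Function.Injective
      (fun (v : {v : V // v ≠ root}) => (⟨s(v.1, nb v.1 v.2), (hadj v.1 v.2)⟩ : G.edgeSet)) := by
    rintro ⟨v, hv⟩ ⟨v', hv'⟩ hE
    replace hE := congrArg Subtype.val hE
    simp only [Subtype.mk_eq_mk, Sym2.eq_iff] at hE ⊢
    rcases hE with ⟨h1, _⟩ | ⟨h1, h2⟩
    · exact h1
    · exfalso
      have H1 := hlt v hv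
      have H2 := hlt v' hv'
      rw [h2] at H1
      rw [← h1] at H2
      omega
  have hcard := Fintype.card_le_of_injective _ hinj
  have h2 : Fintype.card {v : V // v ≠ root} = Fintype.card V - 1 := by
    have : Nonempty V := ⟨root⟩
    simp [Fintype.card_subtype_compl]
  have hpos : 1 ≤ Fintype.card V := @Fintype.card_pos V _ ⟨root⟩
  have hsame : Fintype.card {x // x ∈ G.edgeSet} = Fintype.card G.edgeSet :=
    Fintype.card_congr (Equiv.refl _)
  omega

lemma subgraph_card_le {V : Type} [Fintype V] [DecidableEq V] {G : SimpleGraph V}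
    (R : G.Subgraph) (h : R.Connected) :
    (Set.toFinite R.verts).toFinset.card ≤ (Set.toFinite R.edgeSet).toFinset.card + 1 := by
  classical
  letI : Fintype ↥R.verts := Set.Finite.fintype (Set.toFinite _)
  letI : Fintype ↥(R.coe.edgeSet) := Set.Finite.fintype (Set.toFinite _)
  letI : Fintype ↥(R.edgeSet) := Set.Finite.fintype (Set.toFinite _)
  have hcoe : R.coe.Connected := h.coe
  have hmain : Fintype.card ↥R.verts ≤ Fintype.card R.coe.edgeSet + 1 :=
    conn_card_le R.coe hcoe
  have hmap : ∀ e : R.coe.edgeSet, (Sym2.map (Subtype.val) e.1) ∈ R.edgeSet := by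
    rintro ⟨e, he⟩
    induction e with
    | _ a b =>
      simp only [Sym2.map_pair_eq]
      rw [SimpleGraph.mem_edgeSet] at he
      rw [Subgraph.mem_edgeSet]
      exact (R.coe_adj a b) ▸ he
  have hinj : Function.Injective (fun e : R.coe.edgeSet => (⟨_, hmap e⟩ : R.edgeSet)) := by
    rintro ⟨e, he⟩ ⟨e', he'⟩ hE
    simp only [Subtype.mk_eq_mk] at hE ⊢
    exact Sym2.map.injective Subtype.val_injective hE
  have hcard2 : Fintype.card R.coe.edgeSet ≤ Fintype.card R.edgeSet :=
    Fintype.card_le_of_injective _ hinj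
  have e1 : (Set.toFinite R.verts).toFinset.card = Fintype.card ↥R.verts := by
    rw [Set.Finite.card_toFinset]
  have e2 : (Set.toFinite R.edgeSet).toFinset.card = Fintype.card ↥R.edgeSet := by
    rw [Set.Finite.card_toFinset]
  omega

lemma filter_mem_sym2 {V : Type} [Fintype V] [DecidableEq V] (a b : V) :
    Finset.univ.filter (fun v => v ∈ s(a, b)) = {a, b} := by
  ext v
  simp [Sym2.mem_iff]

lemma sum_weight_eq {V : Type} [Fintype V] [DecidableEq V] (t : V → ℝ) (w : Sym2 V → ℝ)
    (hw : ∀ a b : V, w s(a, b) = t a + t b) (F : Finset (Sym2 V))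
    (hF : ∀ e ∈ F, ¬ e.IsDiag) :
    ∑ e ∈ F, w e = ∑ v : V, ((F.filter (fun e => v ∈ e)).card : ℝ) * t v := by
  have step1 : ∀ e ∈ F, w e = ∑ v : V, if v ∈ e then t v else 0 := by
    intro e he
    induction e with
    | _ a b =>
      have hab : a ≠ b := by
        intro hcon; exact hF _ he (by simp [hcon])
      rw [hw a b, Finset.sum_ite, Finset.sum_const_zero, add_zero,
        filter_mem_sym2 a b, Finset.sum_pair hab]
  rw [Finset.sum_congr rfl step1, Finset.sum_comm]
  refine Finset.sum_congr rfl fun v _ => ?_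
  rw [Finset.sum_ite, Finset.sum_const_zero, add_zero, Finset.sum_const, nsmul_eq_mul]

lemma handshake {V : Type} [Fintype V] [DecidableEq V] (F : Finset (Sym2 V))
    (hF : ∀ e ∈ F, ¬ e.IsDiag) :
    ∑ v : V, (F.filter (fun e => v ∈ e)).card = 2 * F.card := by
  have h1 : ∀ v : V, (F.filter (fun e => v ∈ e)).card = ∑ e ∈ F, if v ∈ e then 1 else 0 := by
    intro v
    rw [Finset.sum_ite, Finset.sum_const_zero, add_zero, Finset.sum_const, smul_eq_mul, mul_one]
  simp_rw [h1]
  rw [Finset.sum_comm]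
  have h2 : ∀ e ∈ F, (∑ v : V, if v ∈ e then 1 else 0) = 2 := by
    intro e he
    induction e with
    | _ a b =>
      have hab : a ≠ b := by
        intro hcon; exact hF _ he (by simp [hcon])
      rw [Finset.sum_ite, Finset.sum_const_zero, add_zero, Finset.sum_const, smul_eq_mul, mul_one,
        filter_mem_sym2 a b, Finset.card_pair hab]
  rw [Finset.sum_congr rfl h2, Finset.sum_const, smul_eq_mul, mul_comm]

/-- The star subgraph of the complete graph with center `c`, on the vertex set
avoiding `u`. -/
def starSub {n : ℕ} (c u : Fin n) : (⊤ : SimpleGraph (Fin n)).Subgraph where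
  verts := {j | j ≠ u}
  Adj a b := a ≠ b ∧ a ≠ u ∧ b ≠ u ∧ (a = c ∨ b = c)
  adj_sub := fun h => h.1
  edge_vert := fun h => h.2.1
  symm := ⟨fun a b h => ⟨h.1.symm, h.2.2.1, h.2.1, h.2.2.2.symm⟩⟩

lemma starSub_verts {n : ℕ} (c u : Fin n) : (starSub c u).verts = {j | j ≠ u} := rfl

lemma starSub_connected {n : ℕ} (c u : Fin n) (hcu : c ≠ u) : (starSub c u).Connected := by
  rw [SimpleGraph.Subgraph.connected_iff]
  constructor
  · rw [SimpleGraph.Subgraph.preconnected_iff]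
    have hc : c ∈ (starSub c u).verts := hcu
    have rc : ∀ (x : Fin n) (hx : x ∈ (starSub c u).verts),
        (starSub c u).coe.Reachable ⟨x, hx⟩ ⟨c, hc⟩ := by
      intro x hx
      by_cases hxc : x = c
      · subst hxc; exact SimpleGraph.Reachable.refl _
      · refine SimpleGraph.Adj.reachable ?_
        rw [SimpleGraph.Subgraph.coe_adj]
        exact ⟨hxc, hx, hcu, Or.inr rfl⟩
    rintro ⟨a, ha⟩ ⟨b, hb⟩
    exact (rc a ha).trans (rc b hb).symm
  · exact ⟨c, hcu⟩

lemma starSub_edgeFinset {n : ℕ} (c u : Fin n) (hcu : c ≠ u) :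
    (Set.toFinite (starSub c u).edgeSet).toFinset
      = ((Finset.univ.erase u).erase c).image (fun j => s(c, j)) := by
  ext e
  rw [Set.Finite.mem_toFinset]
  induction e with
  | _ a b =>
    simp only [Finset.mem_image, Finset.mem_erase, Finset.mem_univ, and_true]
    rw [SimpleGraph.Subgraph.mem_edgeSet]
    constructor
    · rintro ⟨hab, hau, hbu, hc | hc⟩
      · exact ⟨b, ⟨fun h => hab (hc.trans h.symm) , hbu⟩, by rw [hc]⟩
      · exact ⟨a, ⟨fun h => hab (h.trans hc.symm), hau⟩, by rw [hc, Sym2.eq_swap]⟩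
    · rintro ⟨j, ⟨hjc, hju⟩, hj⟩
      rw [Sym2.eq_iff] at hj
      rcases hj with ⟨h1, h2⟩ | ⟨h1, h2⟩
      · subst h1; subst h2; exact ⟨fun h => hjc h.symm, hcu, hju, Or.inl rfl⟩
      · subst h1; subst h2; exact ⟨hjc, hju, hcu, Or.inr rfl⟩

lemma starSub_weight {n : ℕ} (t : Fin n → ℝ) (w : Sym2 (Fin n) → ℝ)
    (hw : ∀ a b : Fin n, w s(a, b) = t a + t b) (c u : Fin n) (hcu : c ≠ u) :
    subgraphWeight w (starSub c u) = ((n : ℝ) - 2) * t c + (∑ v, t v - t u - t c) := by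
  rw [subgraphWeight, starSub_edgeFinset c u hcu, Finset.sum_image ?hinj]
  case hinj =>
    intro j hj j' hj' hE
    rw [Sym2.eq_iff] at hE
    rcases hE with ⟨_, h⟩ | ⟨h1, h2⟩
    · exact h
    · exact absurd h1.symm (Finset.mem_erase.1 hj').1.elim
  have hcard : ((Finset.univ.erase u).erase c).card = n - 2 := by
    rw [Finset.card_erase_of_mem (Finset.mem_erase.2 ⟨hcu, Finset.mem_univ c⟩),
      Finset.card_erase_of_mem (Finset.mem_univ u), Finset.card_univ, Fintype.card_fin]
    omega
  have hs1 : ∑ j ∈ (Finset.univ.erase u), t j + t u = ∑ v, t v :=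
    Finset.sum_erase_add _ _ (Finset.mem_univ u)
  have hs2 : ∑ j ∈ ((Finset.univ.erase u).erase c), t j + t c = ∑ j ∈ (Finset.univ.erase u), t j :=
    Finset.sum_erase_add _ _ (Finset.mem_erase.2 ⟨hcu, Finset.mem_univ c⟩)
  have hn2 : ((n : ℝ) - 2) = (((Finset.univ.erase u).erase c).card : ℝ) := by
    rw [hcard]
    have : 2 ≤ n := by
      by_contra hcon
      interval_cases n
      · exact absurd (Subsingleton.elim c u) hcu
      · exact absurd (Subsingleton.elim c u) hcu
    push_cast [Nat.cast_sub this]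
    ring
  calc ∑ j ∈ ((Finset.univ.erase u).erase c), w s(c, j)
      = ∑ j ∈ ((Finset.univ.erase u).erase c), (t c + t j) := by
        exact Finset.sum_congr rfl fun j _ => hw c j
    _ = (((Finset.univ.erase u).erase c).card : ℝ) * t c
          + ∑ j ∈ ((Finset.univ.erase u).erase c), t j := by
        rw [Finset.sum_add_distrib, Finset.sum_const, nsmul_eq_mul]
    _ = ((n : ℝ) - 2) * t c + (∑ v, t v - t u - t c) := by
        rw [← hn2]; linarith

lemma weight_lower_bound {n : ℕ} (t : Fin n → ℝ) (ht : ∀ v, 0 ≤ t v)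
    (w : Sym2 (Fin n) → ℝ) (hw : ∀ a b : Fin n, w s(a, b) = t a + t b)
    (R : (⊤ : SimpleGraph (Fin n)).Subgraph) (hR : R.Connected)
    (htwo : 2 ≤ (Set.toFinite R.verts).toFinset.card)
    (m : ℝ) (hm0 : 0 ≤ m) (hmt : ∀ v ∈ R.verts, m ≤ t v) :
    ∑ v ∈ (Set.toFinite R.verts).toFinset, t v
      + (((Set.toFinite R.verts).toFinset.card : ℝ) - 2) * m ≤ subgraphWeight w R := by
  classical
  set F := (Set.toFinite R.edgeSet).toFinset with hF
  set Wf := (Set.toFinite R.verts).toFinset with hWf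
  have hFnd : ∀ e ∈ F, ¬ e.IsDiag := by
    intro e he
    rw [hF, Set.Finite.mem_toFinset] at he
    induction e with
    | _ a b =>
      intro hd
      rw [Sym2.isDiag_iff_proj_eq] at hd
      rw [SimpleGraph.Subgraph.mem_edgeSet] at he
      exact (R.adj_sub he).ne hd
  set d : Fin n → ℕ := fun v => (F.filter (fun e => v ∈ e)).card with hd
  have hwt : subgraphWeight w R = ∑ v : Fin n, (d v : ℝ) * t v := sum_weight_eq t w hw F hFnd
  have hmemF : ∀ e ∈ F, e ∈ R.edgeSet := fun e he => (Set.Finite.mem_toFinset _).1 he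
  have hd0 : ∀ v : Fin n, v ∉ R.verts → d v = 0 := by
    intro v hv
    rw [hd]
    simp only [Finset.card_eq_zero, Finset.filter_eq_empty_iff]
    intro e he
    induction e with
    | _ a b =>
      intro hvm
      rw [Sym2.mem_iff] at hvm
      have hadj := (SimpleGraph.Subgraph.mem_edgeSet).1 (hmemF _ he)
      rcases hvm with rfl | rfl
      · exact hv (R.edge_vert hadj)
      · exact hv (R.edge_vert hadj.symm)
  have hd1 : ∀ v ∈ Wf, 1 ≤ d v := by
    intro v hv
    rw [hWf, Set.Finite.mem_toFinset] at hv
    obtain ⟨b, hb, hbv⟩ : ∃ b ∈ R.verts, b ≠ v := by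
      obtain ⟨x, hx, y, hy, hxy⟩ := Finset.one_lt_card.1 htwo
      rw [Set.Finite.mem_toFinset] at hx hy
      by_cases hxv : x = v
      · exact ⟨y, hy, fun h => hxy (h.symm ▸ hxv ▸ rfl)⟩
      · exact ⟨x, hx, hxv⟩
    obtain ⟨p⟩ := hR ⟨v, hv⟩ ⟨b, hb⟩
    cases p with
    | nil => exact absurd rfl hbv
    | @cons _ x _ hadj q =>
      rw [SimpleGraph.Subgraph.coe_adj] at hadj
      refine Finset.card_pos.2 ⟨s(v, x.1), ?_⟩
      rw [Finset.mem_filter]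
      exact ⟨(Set.Finite.mem_toFinset _).2 ((SimpleGraph.Subgraph.mem_edgeSet).2 hadj),
        Sym2.mem_mk_left _ _⟩
  have hsum_d : ∑ v ∈ Wf, d v = 2 * F.card := by
    rw [Finset.sum_subset (Finset.subset_univ Wf)
      (fun v _ hv => hd0 v (by rwa [hWf, Set.Finite.mem_toFinset] at hv))]
    exact handshake F hFnd
  have hcards := subgraph_card_le R hR
  have step1 : ∑ v ∈ Wf, (d v : ℝ) * t v ≤ ∑ v : Fin n, (d v : ℝ) * t v := by
    refine Finset.sum_le_sum_of_subset_of_nonneg (Finset.subset_univ Wf) ?_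
    intro v _ _
    exact mul_nonneg (Nat.cast_nonneg _) (ht v)
  have step2 : ∑ v ∈ Wf, t v + ∑ v ∈ Wf, ((d v : ℝ) - 1) * m ≤ ∑ v ∈ Wf, (d v : ℝ) * t v := by
    rw [← Finset.sum_add_distrib]
    refine Finset.sum_le_sum ?_
    intro v hv
    have h1 : (1 : ℝ) ≤ (d v : ℝ) := by exact_mod_cast hd1 v hv
    have h2 : m ≤ t v := hmt v ((Set.Finite.mem_toFinset _).1 hv)
    nlinarith [ht v]
  have step3 : ∑ v ∈ Wf, ((d v : ℝ) - 1) * m = (2 * (F.card : ℝ) - (Wf.card : ℝ)) * m := by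
    have hcast : ∑ v ∈ Wf, ((d v : ℝ)) = 2 * (F.card : ℝ) := by
      have h := congrArg (Nat.cast : ℕ → ℝ) hsum_d
      push_cast at h
      exact h
    rw [← Finset.sum_mul, Finset.sum_sub_distrib, Finset.sum_const, hcast]
    simp
  have step4 : ((Wf.card : ℝ) - 2) * m ≤ (2 * (F.card : ℝ) - (Wf.card : ℝ)) * m := by
    refine mul_le_mul_of_nonneg_right ?_ hm0
    have h1 : Wf.card ≤ F.card + 1 := hcards
    have h2 : (Wf.card : ℝ) ≤ (F.card : ℝ) + 1 := by exact_mod_cast h1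
    linarith
  rw [hwt]
  linarith

set_option maxHeartbeats 1000000 in
/-- Theorem 4.1, sufficiency: a family of positive reals satisfying (i) and
(ii) is realized by a connected positive-weighted graph with exactly `n`
vertices. -/
theorem graph_exactly_n_vertices_exists {n : ℕ} (hn : 3 ≤ n) (D : Fin n → ℝ)
    (hD : ∀ i, 0 < D i)
    (hineq : ∀ i : Fin n, ((n : ℝ) - 2) * D i ≤ ∑ j ∈ Finset.univ.erase i, D j)
    (hstrict : (∃ i j : Fin n, i ≠ j ∧ (∀ k, D k ≤ D i) ∧ D i = D j) →
      ∀ i : Fin n, ((n : ℝ) - 2) * D i < ∑ j ∈ Finset.univ.erase i, D j) :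
    ∃ (G : SimpleGraph (Fin n)) (w : Sym2 (Fin n) → ℝ),
      G.Connected ∧ PosWeighted G w ∧ ∀ i : Fin n, Dhat G w i = D i := by
  classical
  have hN : (3 : ℝ) ≤ (n : ℝ) := by exact_mod_cast hn
  have hN2 : (0 : ℝ) < (n : ℝ) - 2 := by linarith
  set S : ℝ := ∑ j, D j with hSdef
  have hS_erase : ∀ i : Fin n, ∑ j ∈ Finset.univ.erase i, D j = S - D i := by
    intro i
    have := Finset.sum_erase_add Finset.univ D (Finset.mem_univ i)
    linarith
  have hineq' : ∀ i, ((n : ℝ) - 2) * D i ≤ S - D i := by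
    intro i; have h := hineq i; rwa [hS_erase i] at h
  obtain ⟨i₀, -, hmax'⟩ := Finset.exists_max_image Finset.univ D ⟨⟨0, by omega⟩, Finset.mem_univ _⟩
  have hmax : ∀ k, D k ≤ D i₀ := fun k => hmax' k (Finset.mem_univ k)
  have herase_ne : (Finset.univ.erase i₀).Nonempty := by
    rw [← Finset.card_pos, Finset.card_erase_of_mem (Finset.mem_univ i₀), Finset.card_univ,
      Fintype.card_fin]
    omega
  obtain ⟨j₁, hj₁mem, hmax2'⟩ := Finset.exists_max_image _ D herase_ne
  have hj₁ : j₁ ≠ i₀ := (Finset.mem_erase.1 hj₁mem).1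
  have hmax2 : ∀ k, k ≠ i₀ → D k ≤ D j₁ := fun k hk =>
    hmax2' k (Finset.mem_erase.2 ⟨hk, Finset.mem_univ k⟩)
  set τ : ℝ := (S - 2*D i₀ - ((n : ℝ)-3)*D j₁)/(2*((n : ℝ)-2)) with hτdef
  set C : ℝ := (S + ((n : ℝ)-3)*D j₁)/(2*((n : ℝ)-2)) with hCdef
  have hτ' : 2*((n : ℝ)-2)*τ = S - 2*D i₀ - ((n : ℝ)-3)*D j₁ := by
    rw [hτdef]; field_simp
  have hC' : 2*((n : ℝ)-2)*C = S + ((n : ℝ)-3)*D j₁ := by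
    rw [hCdef]; field_simp
  have hSi₀ := hineq' i₀
  have hA1 : 0 ≤ τ := by
    nlinarith [mul_nonneg (by linarith : (0:ℝ) ≤ (n:ℝ) - 3)
      (by linarith [hmax j₁] : (0:ℝ) ≤ D i₀ - D j₁), hSi₀, hN2]
  have hA2 : τ ≤ C - D j₁ := by
    nlinarith [hτ', hC', hmax j₁, hN2]
  have hkey : 0 < τ + (C - D j₁) := by
    rcases (hmax j₁).eq_or_lt with heq | hlt
    · have hst := hstrict ⟨i₀, j₁, Ne.symm hj₁, hmax, heq.symm⟩ j₁
      rw [hS_erase j₁] at hst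
      nlinarith [hτ', hC', hN2, heq]
    · nlinarith [hτ', hC', hSi₀, hN2, hlt]
  set t : Fin n → ℝ := fun k => if k = i₀ then τ else C - D k with htdef
  have ht_i₀ : t i₀ = τ := by rw [htdef]; simp
  have ht_ne : ∀ k, k ≠ i₀ → t k = C - D k := by intro k hk; rw [htdef]; simp [hk]
  have hτt : ∀ v, τ ≤ t v := by
    intro v
    by_cases hv : v = i₀
    · rw [hv, ht_i₀]
    · rw [ht_ne v hv]; have := hmax2 v hv; linarith [hA2]
  have ht0 : ∀ v, 0 ≤ t v := fun v => le_trans hA1 (hτt v)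
  have htm : ∀ v, v ≠ i₀ → C - D j₁ ≤ t v := by
    intro v hv; rw [ht_ne v hv]; linarith [hmax2 v hv]
  set w : Sym2 (Fin n) → ℝ := Sym2.lift ⟨fun a b => t a + t b, fun a b => by ring⟩ with hwdef
  have hw : ∀ a b : Fin n, w s(a, b) = t a + t b := fun a b => by rw [hwdef, Sym2.lift_mk]
  have hwpos : ∀ a b : Fin n, a ≠ b → 0 < w s(a, b) := by
    intro a b hab
    rw [hw]
    have hbound : τ + (C - D j₁) ≤ t a + t b := by
      by_cases ha : a = i₀
      · have hb : b ≠ i₀ := fun h => hab (by rw [ha, h])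
        rw [ha, ht_i₀]; linarith [htm b hb]
      · by_cases hb : b = i₀
        · rw [hb, ht_i₀]; linarith [htm a ha]
        · linarith [htm a ha, hτt b]
    linarith
  have hcard_er : ∀ i : Fin n, ((Finset.univ.erase i).card : ℝ) = (n : ℝ) - 1 := by
    intro i
    rw [Finset.card_erase_of_mem (Finset.mem_univ i), Finset.card_univ, Fintype.card_fin]
    have h1 : 1 ≤ n := by omega
    push_cast [Nat.cast_sub h1]
    ring
  set St : ℝ := ∑ v, t v with hStdef
  have hSt_erase : ∀ i : Fin n, ∑ v ∈ Finset.univ.erase i, t v = St - t i := by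
    intro i
    have := Finset.sum_erase_add Finset.univ t (Finset.mem_univ i)
    linarith
  have hSt : St = τ + (((n : ℝ)-1)*C - (S - D i₀)) := by
    have h1 : ∑ v ∈ Finset.univ.erase i₀, t v = ∑ v ∈ Finset.univ.erase i₀, (C - D v) :=
      Finset.sum_congr rfl fun v hv => ht_ne v (Finset.mem_erase.1 hv).1
    have h2 : ∑ v ∈ Finset.univ.erase i₀, (C - D v) = ((n : ℝ)-1)*C - (S - D i₀) := by
      rw [Finset.sum_sub_distrib, Finset.sum_const, hS_erase i₀, nsmul_eq_mul, hcard_er i₀]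
    have h3 := hSt_erase i₀
    rw [h1, h2, ht_i₀] at h3
    linarith
  have hq : ((n : ℝ)-2)*(τ + C) = S - D i₀ := by linarith [hτ', hC']
  refine ⟨⊤, w, ?_, ?_, ?_⟩
  · exact @SimpleGraph.connected_top (Fin n) ⟨⟨0, by omega⟩⟩
  · intro e he
    induction e with
    | _ a b =>
      rw [SimpleGraph.mem_edgeSet, SimpleGraph.top_adj] at he
      exact hwpos a b he
  · intro i
    -- choose the center and the key identity
    obtain ⟨c, hci, hmle, hmver⟩ : ∃ c : Fin n, c ≠ i ∧ (∀ v, v ≠ i → t c ≤ t v) ∧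
        (((n : ℝ)-2)*t c + (St - t i - t c) = D i) := by
      by_cases hii : i = i₀
      · subst hii
        refine ⟨j₁, hj₁, fun v hv => ?_, ?_⟩
        · rw [ht_ne j₁ hj₁]; exact htm v hv
        · rw [ht_ne j₁ hj₁, ht_i₀]
          nlinarith [hSt, hC']
      · refine ⟨i₀, fun h => hii h.symm, fun v _ => by rw [ht_i₀]; exact hτt v, ?_⟩
        rw [ht_i₀, ht_ne i hii]
        nlinarith [hSt, hτ', hC']
    rw [Dhat, graphDist]
    refine IsLeast.csInf_eq ⟨⟨starSub c i, starSub_connected c i hci, ?_, ?_⟩, ?_⟩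
    · rw [starSub_verts]
    · rw [starSub_weight t w hw c i hci, ← hStdef]
      linarith [hmver]
    · rintro x ⟨R, hR, hsub, rfl⟩
      by_cases hiv : i ∈ R.verts
      · -- R.verts = univ
        have hWfeq : (Set.toFinite R.verts).toFinset = Finset.univ := by
          ext v
          simp only [Set.Finite.mem_toFinset, Finset.mem_univ, iff_true]
          by_cases hvi : v = i
          · exact hvi ▸ hiv
          · exact hsub hvi
        have htwo : 2 ≤ (Set.toFinite R.verts).toFinset.card := by
          rw [hWfeq, Finset.card_univ, Fintype.card_fin]; omega
        have hlb := weight_lower_bound t ht0 w hw R hR htwo τ hA1 (fun v _ => hτt v)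
        rw [hWfeq] at hlb
        have hcu : ((Finset.univ : Finset (Fin n)).card : ℝ) = (n : ℝ) := by
          rw [Finset.card_univ, Fintype.card_fin]
        rw [hcu, ← hStdef] at hlb
        -- D i ≤ St + ((n:ℝ)-2)*τ
        have h1 : ((n : ℝ)-2)*D i ≤ S - D i₀ := by
          nlinarith [mul_le_mul_of_nonneg_left (hmax i) (le_of_lt hN2), hSi₀]
        have hq2 : D i ≤ τ + C := by nlinarith [hq, h1, hN2]
        linarith [hSt, hq, hq2, hlb]
      · -- R.verts = {j | j ≠ i}
        have hVeq : R.verts = {j | j ≠ i} := by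
          refine subset_antisymm (fun v hv => ?_) hsub
          intro hvi
          exact hiv (hvi ▸ hv)
        have hWfeq : (Set.toFinite R.verts).toFinset = Finset.univ.erase i := by
          ext v
          rw [Set.Finite.mem_toFinset, hVeq, Finset.mem_erase]
          simp
        have htwo : 2 ≤ (Set.toFinite R.verts).toFinset.card := by
          rw [hWfeq, Finset.card_erase_of_mem (Finset.mem_univ i), Finset.card_univ,
            Fintype.card_fin]
          omega
        have hmt : ∀ v ∈ R.verts, t c ≤ t v := by
          intro v hv
          rw [hVeq] at hv
          exact hmle v hv
        have hlb := weight_lower_bound t ht0 w hw R hR htwo (t c)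
          (le_trans hA1 (hτt c)) hmt
        rw [hWfeq, hcard_er i, hSt_erase i] at hlb
        linarith [hmver, hlb]
end
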